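/- Let φ be a 3-CNF formula with m ≥ 2 clauses over n ≥ 4 variables, each clause containing exactly three literals on three pairwise distinct variables, and every variable occurring (in some polarity) in at least one clause. Then the graph G(φ) is 3-colorable (its vertex set partitions into the three independent sets I_0 = {v_x : x a variable} ∪ {c_j^a : 1 ≤ j ≤ m} ∪ {b, c}, I_1 = {v_x̄ : x a variable} ∪ {c_j^b : 1 ≤ j ≤ m} ∪ {d}, I_2 = {c_j : 1 ≤ j ≤ m} ∪ {a}), has domination number exactly 3 (with {a,b,c} a dominating set), has diameter exactly 3, and has radius exactly 2. -/

import Mathlib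

open SimpleGraph

/-- Vertices of the graph `G(φ)`: four special vertices `a, b, c, d`, a literal vertex
`lit x s` for each variable `x` and polarity `s` (`lit x true = v_x`,
`lit x false = v_x̄`), and for each clause `j` the triangle `cl j, cla j, clb j`. -/
inductive GV (n m : ℕ) where
  | a | b | c | d
  | lit : Fin n → Bool → GV n m
  | cl : Fin m → GV n m
  | cla : Fin m → GV n m
  | clb : Fin m → GV n m
deriving DecidableEq

/-- The graph `G(φ)` built from a 3-CNF formula `φ` whose `j`-th clause consists of the
three literals `Cl j 0, Cl j 1, Cl j 2` (a literal being a pair of a variable and a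
polarity). -/
def Gphi {n m : ℕ} (Cl : Fin m → Fin 3 → Fin n × Bool) : SimpleGraph (GV n m) :=
  SimpleGraph.fromRel (fun x y =>
    match x, y with
    | .a, .b => True
    | .a, .c => True
    | .a, .d => True
    | .b, .d => True
    | .c, .d => True
    | .lit x s, .lit x' s' => x = x' ∧ s ≠ s'
    | .a, .lit _ _ => True
    | .cl j, .cla j' => j = j'
    | .cl j, .clb j' => j = j'
    | .cla j, .clb j' => j = j'
    | .cl j, .lit x s => ∃ t, Cl j t = (x, s)
    | .c, .cl _ => True
    | .a, .cla _ => True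
    | .b, .clb _ => True
    | _, _ => False)

/-- The domination number: the least size of a set `D` of vertices such that every vertex
outside `D` has a neighbor in `D`. -/
noncomputable def domNum {V : Type*} (G : SimpleGraph V) : ℕ :=
  sInf {s | ∃ D : Finset V, D.card = s ∧ ∀ v ∉ D, ∃ u ∈ D, G.Adj u v}

/-- The radius: the minimum over vertices `u` of the maximum distance from `u`. -/
noncomputable def gRadius {V : Type*} (G : SimpleGraph V) : ℕ :=
  sInf {r | ∃ u : V, ∀ v : V, G.dist u v ≤ r}


section Helpers

variable {n m : ℕ} {Cl : Fin m → Fin 3 → Fin n × Bool}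

/-- The 3-coloring of `G(φ)`. -/
def col : GV n m → Fin 3
  | .a => 2 | .b => 0 | .c => 0 | .d => 1
  | .lit _ true => 0 | .lit _ false => 1
  | .cl _ => 2 | .cla _ => 0 | .clb _ => 1

lemma col_valid : ∀ u v : GV n m, (Gphi Cl).Adj u v → col u ≠ col v := by
  rintro u v ⟨hne, h | h⟩ <;>
    rcases u with _|_|_|_|⟨x,(_|_)⟩|j|j|j <;>
    rcases v with _|_|_|_|⟨x',(_|_)⟩|j'|j'|j' <;>
    simp_all [col]

lemma adj_d_iff (z : GV n m) : (Gphi Cl).Adj z .d ↔ z = .a ∨ z = .b ∨ z = .c := by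
  cases z <;> simp [Gphi]

lemma adj_clb_iff (z : GV n m) (j) :
    (Gphi Cl).Adj z (.clb j) ↔ z = .b ∨ z = .cl j ∨ z = .cla j := by
  cases z <;> simp [Gphi, eq_comm]

lemma adj_cla_iff (z : GV n m) (j) :
    (Gphi Cl).Adj z (.cla j) ↔ z = .a ∨ z = .cl j ∨ z = .clb j := by
  cases z <;> simp [Gphi, eq_comm]

lemma adj_cl_iff (z : GV n m) (j) :
    (Gphi Cl).Adj z (.cl j) ↔ z = .c ∨ z = .cla j ∨ z = .clb j ∨
      ∃ x s, z = .lit x s ∧ ∃ t, Cl j t = (x, s) := by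
  rcases z with _|_|_|_|⟨y,(_|_)⟩|_|_|_ <;> simp [Gphi, eq_comm] <;>
    constructor <;> rintro ⟨t, ht⟩ <;> exact ⟨t, by simp [ht]⟩

lemma adj_lit_iff (z : GV n m) (x s) :
    (Gphi Cl).Adj z (.lit x s) ↔ z = .a ∨ z = .lit x (!s) ∨
      ∃ j, z = .cl j ∧ ∃ t, Cl j t = (x, s) := by
  rcases z with _|_|_|_|⟨y,(_|_)⟩|_|_|_ <;> cases s <;> simp [Gphi, eq_comm, And.comm]

lemma adj_ab : (Gphi Cl).Adj .a .b := ⟨by simp, Or.inl trivial⟩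
lemma adj_ac : (Gphi Cl).Adj .a .c := ⟨by simp, Or.inl trivial⟩
lemma adj_ad : (Gphi Cl).Adj .a .d := ⟨by simp, Or.inl trivial⟩
lemma adj_alit (x s) : (Gphi Cl).Adj .a (.lit x s) := ⟨by simp, Or.inl trivial⟩
lemma adj_acla (j) : (Gphi Cl).Adj .a (.cla j) := ⟨by simp, Or.inl trivial⟩
lemma adj_bclb (j) : (Gphi Cl).Adj .b (.clb j) := ⟨by simp, Or.inl trivial⟩
lemma adj_ccl (j) : (Gphi Cl).Adj .c (.cl j) := ⟨by simp, Or.inl trivial⟩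
lemma adj_clacl (j) : (Gphi Cl).Adj (.cla j) (.cl j) := ⟨by simp, Or.inr rfl⟩
lemma adj_clclb (j) : (Gphi Cl).Adj (.cl j) (.clb j) := ⟨by simp, Or.inl rfl⟩

lemma edist_a_le (v : GV n m) : (Gphi Cl).edist .a v ≤ 2 := by
  have h1 : ∀ w : GV n m, (Gphi Cl).Adj .a w → (Gphi Cl).edist .a w ≤ 2 := fun w h => by
    refine le_trans (edist_le h.toWalk) ?_
    simp
  cases v with
  | a => simp
  | b => exact h1 _ adj_ab
  | c => exact h1 _ adj_ac
  | d => exact h1 _ adj_ad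
  | lit x s => exact h1 _ (adj_alit x s)
  | cla j => exact h1 _ (adj_acla j)
  | cl j =>
      refine le_trans (edist_le (Walk.cons (adj_acla j) (Walk.cons (adj_clacl j) Walk.nil))) ?_
      simp
  | clb j =>
      refine le_trans (edist_le (Walk.cons adj_ab (Walk.cons (adj_bclb j) Walk.nil))) ?_
      simp

lemma reach (u v : GV n m) : (Gphi Cl).Reachable u v := by
  have h : ∀ w : GV n m, (Gphi Cl).Reachable .a w := fun w =>
    reachable_of_edist_ne_top (lt_of_le_of_lt (edist_a_le w) (lt_top_iff_ne_top.mpr (by decide))).ne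
  exact (h u).symm.trans (h v)

lemma near_a (w : GV n m) :
    (Gphi Cl).edist .a w ≤ 1 ∨ (∃ j, w = GV.cl j) ∨ (∃ j, w = GV.clb j) := by
  have h1 : ∀ w : GV n m, (Gphi Cl).Adj .a w → (Gphi Cl).edist .a w ≤ 1 := fun w h =>
    le_of_eq (edist_eq_one_iff_adj.mpr h)
  cases w with
  | a => exact Or.inl (by simp)
  | b => exact Or.inl (h1 _ adj_ab)
  | c => exact Or.inl (h1 _ adj_ac)
  | d => exact Or.inl (h1 _ adj_ad)
  | lit x s => exact Or.inl (h1 _ (adj_alit x s))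
  | cla j => exact Or.inl (h1 _ (adj_acla j))
  | cl j => exact Or.inr (Or.inl ⟨j, rfl⟩)
  | clb j => exact Or.inr (Or.inr ⟨j, rfl⟩)

lemma edist_le_three (u v : GV n m) : (Gphi Cl).edist u v ≤ 3 := by
  have tri := SimpleGraph.edist_triangle (G := Gphi Cl) (u := u) (v := .a) (w := v)
  have hcu : (Gphi Cl).edist u .a = (Gphi Cl).edist .a u := edist_comm
  rcases near_a (Cl := Cl) u with hu | hu | hu
  · calc (Gphi Cl).edist u v ≤ _ := tri
      _ ≤ 1 + 2 := add_le_add (hcu ▸ hu) (edist_a_le v)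
      _ = 3 := by norm_num
  all_goals rcases near_a (Cl := Cl) v with hv | hv | hv
  · obtain ⟨j, rfl⟩ := hu
    calc (Gphi Cl).edist _ v ≤ _ := tri
      _ ≤ 2 + 1 := add_le_add (hcu ▸ edist_a_le _) hv
      _ = 3 := by norm_num
  · obtain ⟨j, rfl⟩ := hu; obtain ⟨j', rfl⟩ := hv
    refine le_trans (edist_le (Walk.cons (adj_ccl j).symm (Walk.cons (adj_ccl j') Walk.nil))) ?_
    simp only [Walk.length_cons, Walk.length_nil]
    norm_num
  · obtain ⟨j, rfl⟩ := hu; obtain ⟨j', rfl⟩ := hv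
    refine le_trans (edist_le (Walk.cons (adj_ccl j).symm
      (Walk.cons (adj_ccl j') (Walk.cons (adj_clclb j') Walk.nil)))) ?_
    simp only [Walk.length_cons, Walk.length_nil]
    norm_num
  · obtain ⟨j, rfl⟩ := hu
    calc (Gphi Cl).edist _ v ≤ _ := tri
      _ ≤ 2 + 1 := add_le_add (hcu ▸ edist_a_le _) hv
      _ = 3 := by norm_num
  · obtain ⟨j, rfl⟩ := hu; obtain ⟨j', rfl⟩ := hv
    refine le_trans (edist_le (Walk.cons (adj_bclb j).symm
      (Walk.cons (adj_bclb j') (Walk.cons (adj_clclb j').symm Walk.nil)))) ?_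
    simp only [Walk.length_cons, Walk.length_nil]
    norm_num
  · obtain ⟨j, rfl⟩ := hu; obtain ⟨j', rfl⟩ := hv
    refine le_trans (edist_le (Walk.cons (adj_bclb j).symm
      (Walk.cons (adj_bclb j') Walk.nil))) ?_
    simp only [Walk.length_cons, Walk.length_nil]
    norm_num

lemma three_le_edist {j0 j1 : Fin m} (hj : j0 ≠ j1) :
    3 ≤ (Gphi Cl).edist (.cla j0) (.clb j1) := by
  by_contra hlt
  push_neg at hlt
  obtain ⟨p, hp⟩ := exists_walk_of_edist_ne_top (G := Gphi Cl)
    (u := GV.cla j0) (v := GV.clb j1) (hlt.trans_le le_top).ne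
  have hlen : p.length < 3 := by
    have := hp ▸ hlt
    exact_mod_cast this
  cases p with
  | cons h q =>
    cases q with
    | nil =>
      rw [adj_clb_iff] at h
      simp [hj] at h
    | cons h' q' =>
      cases q' with
      | nil =>
        rw [adj_clb_iff] at h'
        have hz := (adj_cla_iff (Cl := Cl) _ j0).mp h.symm
        rcases hz with rfl | rfl | rfl <;> rcases h' with h' | h' | h' <;> simp_all
      | cons h'' q'' =>
        simp only [Walk.length_cons] at hlen
        omega

lemma two_le_dist_of_nonadj {u v : GV n m} (hne : u ≠ v) (hna : ¬ (Gphi Cl).Adj u v) :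
    2 ≤ (Gphi Cl).dist u v := by
  obtain ⟨p, hp⟩ := (reach (Cl := Cl) u v).exists_walk_length_eq_dist
  by_contra hlt
  push_neg at hlt
  interval_cases h : (Gphi Cl).dist u v
  · exact hne (Walk.eq_of_length_eq_zero hp)
  · exact hna (Walk.adj_of_length_eq_one hp)

lemma exists_nonadj (hm : 2 ≤ m) (hn : 4 ≤ n) (u : GV n m) :
    ∃ v, u ≠ v ∧ ¬ (Gphi Cl).Adj u v := by
  have hm0 : 0 < m := by omega
  have hn0 : 0 < n := by omega
  cases u with
  | a => exact ⟨.cl ⟨0, hm0⟩, by simp, fun h => by simp [adj_cl_iff] at h⟩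
  | b => exact ⟨.c, by simp, fun h => by
      rcases h with ⟨_, h | h⟩ <;> exact h⟩
  | c => exact ⟨.b, by simp, fun h => by
      rcases h with ⟨_, h | h⟩ <;> exact h⟩
  | d => exact ⟨.lit ⟨0, hn0⟩ true, by simp, fun h => by simp [adj_lit_iff] at h⟩
  | lit x s => exact ⟨.d, by simp, fun h => by simp [adj_d_iff] at h⟩
  | cl j => exact ⟨.a, by simp, fun h => by have h2 := h.symm; simp [adj_cl_iff] at h2⟩
  | cla j => exact ⟨.b, by simp, fun h => by have h2 := h.symm; simp [adj_cla_iff] at h2⟩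
  | clb j => exact ⟨.a, by simp, fun h => by have h2 := h.symm; simp [adj_clb_iff] at h2⟩

/-- no vertex `≠ b` is in two distinct clause triangles -/
lemma triangle_disjoint {j0 j1 : Fin m} (hj : j0 ≠ j1) (z : GV n m)
    (h0 : z = .cl j0 ∨ z = .cla j0 ∨ z = .clb j0)
    (h1 : z = .cl j1 ∨ z = .cla j1 ∨ z = .clb j1) : False := by
  rcases h0 with rfl | rfl | rfl <;> rcases h1 with h1 | h1 | h1 <;> simp_all

lemma keyb (hm : 2 ≤ m) (hn : 4 ≤ n) (v : GV n m) :
    ∃ w : GV n m, w ≠ .b ∧ w ≠ v ∧ ¬ (Gphi Cl).Adj .b w ∧ ¬ (Gphi Cl).Adj v w := by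
  have hm0 : (0 : ℕ) < m := by omega
  have hm1 : (1 : ℕ) < m := by omega
  have hn0 : (0 : ℕ) < n := by omega
  have hn1 : (1 : ℕ) < n := by omega
  have hbcl : ∀ j, ¬ (Gphi Cl).Adj .b (.cl j) := fun j h => by simp [adj_cl_iff] at h
  have hblit : ∀ x s, ¬ (Gphi Cl).Adj .b (.lit x s) := fun x s h => by
    simp [adj_lit_iff] at h
  cases v with
  | a => exact ⟨.cl ⟨0, hm0⟩, by simp, by simp, hbcl _, fun h => by simp [adj_cl_iff] at h⟩
  | b => exact ⟨.cl ⟨0, hm0⟩, by simp, by simp, hbcl _, hbcl _⟩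
  | c => exact ⟨.lit ⟨0, hn0⟩ true, by simp, by simp, hblit _ _,
      fun h => by simp [adj_lit_iff] at h⟩
  | d => exact ⟨.cl ⟨0, hm0⟩, by simp, by simp, hbcl _, fun h => by simp [adj_cl_iff] at h⟩
  | lit y t =>
      obtain ⟨x, hxy⟩ : ∃ x : Fin n, x ≠ y := by
        by_cases h : y = ⟨0, hn0⟩
        · exact ⟨⟨1, hn1⟩, by simp [h, Fin.ext_iff]⟩
        · exact ⟨⟨0, hn0⟩, fun hh => h hh.symm⟩
      refine ⟨.lit x true, by simp, by simp [hxy], hblit _ _, fun h => ?_⟩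
      rw [adj_lit_iff] at h
      simp [hxy.symm] at h
  | cl j =>
      obtain ⟨j', hjj⟩ : ∃ j' : Fin m, j' ≠ j := by
        by_cases h : j = ⟨0, hm0⟩
        · exact ⟨⟨1, hm1⟩, by simp [h, Fin.ext_iff]⟩
        · exact ⟨⟨0, hm0⟩, fun hh => h hh.symm⟩
      refine ⟨.cl j', by simp, by simp [hjj], hbcl _, fun h => ?_⟩
      rw [adj_cl_iff] at h
      simp at h
  | cla j =>
      obtain ⟨j', hjj⟩ : ∃ j' : Fin m, j' ≠ j := by
        by_cases h : j = ⟨0, hm0⟩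
        · exact ⟨⟨1, hm1⟩, by simp [h, Fin.ext_iff]⟩
        · exact ⟨⟨0, hm0⟩, fun hh => h hh.symm⟩
      refine ⟨.cl j', by simp, by simp, hbcl _, fun h => ?_⟩
      rw [adj_cl_iff] at h
      simp [hjj.symm] at h
  | clb j =>
      obtain ⟨j', hjj⟩ : ∃ j' : Fin m, j' ≠ j := by
        by_cases h : j = ⟨0, hm0⟩
        · exact ⟨⟨1, hm1⟩, by simp [h, Fin.ext_iff]⟩
        · exact ⟨⟨0, hm0⟩, fun hh => h hh.symm⟩
      refine ⟨.cl j', by simp, by simp, hbcl _, fun h => ?_⟩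
      rw [adj_cl_iff] at h
      simp [hjj.symm] at h

lemma key (hm : 2 ≤ m) (hn : 4 ≤ n) (u v : GV n m) :
    ∃ w : GV n m, w ≠ u ∧ w ≠ v ∧ ¬ (Gphi Cl).Adj u w ∧ ¬ (Gphi Cl).Adj v w := by
  have hm0 : (0 : ℕ) < m := by omega
  have hm1 : (1 : ℕ) < m := by omega
  set j0 : Fin m := ⟨0, hm0⟩
  set j1 : Fin m := ⟨1, hm1⟩
  have hj01 : j0 ≠ j1 := by simp [j0, j1]
  by_cases hub : u = .b
  · subst hub
    obtain ⟨w, h1, h2, h3, h4⟩ := keyb (Cl := Cl) hm hn v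
    exact ⟨w, h1, h2, h3, h4⟩
  by_cases hvb : v = .b
  · subst hvb
    obtain ⟨w, h1, h2, h3, h4⟩ := keyb (Cl := Cl) hm hn u
    exact ⟨w, h2, h1, h4, h3⟩
  by_cases h0 : (u = .cl j0 ∨ u = .cla j0 ∨ u = .clb j0) ∨
      (v = .cl j0 ∨ v = .cla j0 ∨ v = .clb j0)
  · by_cases h1 : (u = .cl j1 ∨ u = .cla j1 ∨ u = .clb j1) ∨
        (v = .cl j1 ∨ v = .cla j1 ∨ v = .clb j1)
    · -- both u and v are triangle vertices; use d
      have hT : ∀ z : GV n m, (z = .cl j0 ∨ z = .cla j0 ∨ z = .clb j0) ∨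
          (z = .cl j1 ∨ z = .cla j1 ∨ z = .clb j1) →
          GV.d ≠ z ∧ ¬ (Gphi Cl).Adj z .d := by
        rintro z (h | h) <;>
          exact ⟨by rcases h with rfl | rfl | rfl <;> simp,
            fun hadj => by rw [adj_d_iff] at hadj
                           rcases h with rfl | rfl | rfl <;> simp_all⟩
      rcases h0 with h0 | h0 <;> rcases h1 with h1 | h1
      · exact (triangle_disjoint hj01 u h0 h1).elim
      · obtain ⟨hu1, hu2⟩ := hT u (Or.inl h0)
        obtain ⟨hv1, hv2⟩ := hT v (Or.inr h1)
        exact ⟨.d, hu1, hv1, hu2, hv2⟩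
      · obtain ⟨hu1, hu2⟩ := hT u (Or.inr h1)
        obtain ⟨hv1, hv2⟩ := hT v (Or.inl h0)
        exact ⟨.d, hu1, hv1, hu2, hv2⟩
      · exact (triangle_disjoint hj01 v h0 h1).elim
    · -- neither u nor v in triangle j1: use clb j1
      push_neg at h1
      refine ⟨.clb j1, ?_, ?_, fun h => ?_, fun h => ?_⟩
      · intro h; exact h1.1.2.2 h.symm
      · intro h; exact h1.2.2.2 h.symm
      · rw [adj_clb_iff] at h
        rcases h with h | h | h
        exacts [hub h, h1.1.1 h, h1.1.2.1 h]
      · rw [adj_clb_iff] at h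
        rcases h with h | h | h
        exacts [hvb h, h1.2.1 h, h1.2.2.1 h]
  · push_neg at h0
    refine ⟨.clb j0, ?_, ?_, fun h => ?_, fun h => ?_⟩
    · intro h; exact h0.1.2.2 h.symm
    · intro h; exact h0.2.2.2 h.symm
    · rw [adj_clb_iff] at h
      rcases h with h | h | h
      exacts [hub h, h0.1.1 h, h0.1.2.1 h]
    · rw [adj_clb_iff] at h
      rcases h with h | h | h
      exacts [hvb h, h0.2.1 h, h0.2.2.1 h]

end Helpers


/-- For a 3-CNF formula `φ` with `m ≥ 2` clauses over `n ≥ 4` variables, each clause on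
three pairwise distinct variables and every variable occurring in some clause: `G(φ)` is
`3`-colorable (its vertices partition into the three independent sets
`I₀ = {v_x} ∪ {c_j^a} ∪ {b,c}`, `I₁ = {v_x̄} ∪ {c_j^b} ∪ {d}`, `I₂ = {c_j} ∪ {a}`),
has domination number exactly `3` (with `{a,b,c}` dominating), diameter exactly `3`
and radius exactly `2`. -/
theorem stmt11 {n m : ℕ} (hm : 2 ≤ m) (hn : 4 ≤ n)
    (Cl : Fin m → Fin 3 → Fin n × Bool)
    (hdistinct : ∀ j, ∀ t t' : Fin 3, t ≠ t' → (Cl j t).1 ≠ (Cl j t').1)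
    (hoccur : ∀ x : Fin n, ∃ j t, (Cl j t).1 = x) :
    (Gphi Cl).Colorable 3 ∧
    (let I0 : Set (GV n m) :=
       {w | (∃ x, w = GV.lit x true) ∨ (∃ j, w = GV.cla j) ∨ w = GV.b ∨ w = GV.c}
     let I1 : Set (GV n m) :=
       {w | (∃ x, w = GV.lit x false) ∨ (∃ j, w = GV.clb j) ∨ w = GV.d}
     let I2 : Set (GV n m) := {w | (∃ j, w = GV.cl j) ∨ w = GV.a}
     (∀ w, (w ∈ I0 ∧ w ∉ I1 ∧ w ∉ I2) ∨ (w ∉ I0 ∧ w ∈ I1 ∧ w ∉ I2) ∨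
           (w ∉ I0 ∧ w ∉ I1 ∧ w ∈ I2)) ∧
     (∀ u ∈ I0, ∀ v ∈ I0, ¬ (Gphi Cl).Adj u v) ∧
     (∀ u ∈ I1, ∀ v ∈ I1, ¬ (Gphi Cl).Adj u v) ∧
     (∀ u ∈ I2, ∀ v ∈ I2, ¬ (Gphi Cl).Adj u v)) ∧
    domNum (Gphi Cl) = 3 ∧
    (∀ v : GV n m, v ∉ ({GV.a, GV.b, GV.c} : Finset (GV n m)) →
        ∃ u ∈ ({GV.a, GV.b, GV.c} : Finset (GV n m)), (Gphi Cl).Adj u v) ∧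
    (Gphi Cl).diam = 3 ∧
    gRadius (Gphi Cl) = 2 := by
  have hm0 : (0 : ℕ) < m := by omega
  have hm1 : (1 : ℕ) < m := by omega
  have hj01 : (⟨0, hm0⟩ : Fin m) ≠ ⟨1, hm1⟩ := by simp [Fin.ext_iff]
  have hdomABC : ∀ v : GV n m, v ∉ ({GV.a, GV.b, GV.c} : Finset (GV n m)) →
      ∃ u ∈ ({GV.a, GV.b, GV.c} : Finset (GV n m)), (Gphi Cl).Adj u v := by
    intro v hv
    cases v with
    | a => simp at hv
    | b => simp at hv
    | c => simp at hv
    | d => exact ⟨.a, by simp, adj_ad⟩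
    | lit x s => exact ⟨.a, by simp, adj_alit x s⟩
    | cl j => exact ⟨.c, by simp, adj_ccl j⟩
    | cla j => exact ⟨.a, by simp, adj_acla j⟩
    | clb j => exact ⟨.b, by simp, adj_bclb j⟩
  refine ⟨⟨Coloring.mk col fun hadj => col_valid _ _ hadj⟩, ?_, ?_, hdomABC, ?_, ?_⟩
  · -- partition and independence
    have hI0 : ∀ w : GV n m,
        ((∃ x, w = GV.lit x true) ∨ (∃ j, w = GV.cla j) ∨ w = GV.b ∨ w = GV.c) →
        col w = 0 := by
      rintro w (⟨x, rfl⟩ | ⟨j, rfl⟩ | rfl | rfl) <;> rfl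
    have hI1 : ∀ w : GV n m,
        ((∃ x, w = GV.lit x false) ∨ (∃ j, w = GV.clb j) ∨ w = GV.d) → col w = 1 := by
      rintro w (⟨x, rfl⟩ | ⟨j, rfl⟩ | rfl) <;> rfl
    have hI2 : ∀ w : GV n m, ((∃ j, w = GV.cl j) ∨ w = GV.a) → col w = 2 := by
      rintro w (⟨j, rfl⟩ | rfl) <;> rfl
    refine ⟨?_, fun u hu v hv hadj => col_valid u v hadj (by rw [hI0 u hu, hI0 v hv]),
      fun u hu v hv hadj => col_valid u v hadj (by rw [hI1 u hu, hI1 v hv]),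
      fun u hu v hv hadj => col_valid u v hadj (by rw [hI2 u hu, hI2 v hv])⟩
    intro w
    rcases w with _|_|_|_|⟨x,(_|_)⟩|j|j|j <;> simp [Set.mem_setOf_eq]
  · -- domination number
    have hcard : ({GV.a, GV.b, GV.c} : Finset (GV n m)).card = 3 := by
      rw [Finset.card_insert_of_notMem (by simp), Finset.card_insert_of_notMem (by simp),
        Finset.card_singleton]
    have hmem3 : 3 ∈ {s | ∃ D : Finset (GV n m), D.card = s ∧
        ∀ v ∉ D, ∃ u ∈ D, (Gphi Cl).Adj u v} := ⟨_, hcard, hdomABC⟩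
    refine le_antisymm (Nat.sInf_le hmem3) (le_csInf ⟨3, hmem3⟩ ?_)
    rintro s ⟨D, rfl, hdom⟩
    by_contra hlt
    push_neg at hlt
    obtain ⟨u, v, hsub⟩ : ∃ u v : GV n m, ∀ w ∈ D, w = u ∨ w = v := by
      interval_cases h : D.card
      · exact ⟨.a, .a, fun w hw => absurd hw (by simp [Finset.card_eq_zero.mp h])⟩
      · obtain ⟨u, rfl⟩ := Finset.card_eq_one.mp h
        exact ⟨u, u, fun w hw => Or.inl (Finset.mem_singleton.mp hw)⟩
      · obtain ⟨u, v, -, rfl⟩ := Finset.card_eq_two.mp h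
        exact ⟨u, v, fun w hw => by simpa using hw⟩
    obtain ⟨w, hwu, hwv, hau, hav⟩ := key (Cl := Cl) hm hn u v
    have hwD : w ∉ D := fun hw => by rcases hsub w hw with rfl | rfl <;> simp_all
    obtain ⟨u', hu', hadj⟩ := hdom w hwD
    rcases hsub u' hu' with rfl | rfl
    exacts [hau hadj, hav hadj]
  · -- diameter
    have he : (Gphi Cl).ediam = 3 := by
      refine le_antisymm (ediam_le_of_edist_le fun u v => edist_le_three u v) ?_
      calc (3 : ℕ∞) ≤ (Gphi Cl).edist (.cla ⟨0, hm0⟩) (.clb ⟨1, hm1⟩) := three_le_edist hj01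
        _ ≤ (Gphi Cl).ediam := edist_le_ediam
    show (Gphi Cl).ediam.toNat = 3
    rw [he]
    rfl
  · -- radius
    have h2mem : 2 ∈ {r | ∃ u : GV n m, ∀ v, (Gphi Cl).dist u v ≤ r} := by
      refine ⟨.a, fun v => ?_⟩
      have h := edist_a_le (Cl := Cl) v
      exact ENat.toNat_le_toNat h (by simp)
    refine le_antisymm (Nat.sInf_le h2mem) (le_csInf ⟨2, h2mem⟩ ?_)
    rintro r ⟨u, hu⟩
    by_contra hlt
    push_neg at hlt
    obtain ⟨v, hne, hna⟩ := exists_nonadj (Cl := Cl) hm hn u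
    have h1 := two_le_dist_of_nonadj hne hna
    have h2 := hu v
    omega
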